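/- arXiv:1609.04072 — 4 statements merged into one kernel-verified Lean document; each statement's English description precedes it below -/
import Mathlib

section
/- The connected components functor q : Cat → Set preserves fiber products over discrete categories: if E is a discrete category and f : C → E, g : D → E are functors, then q(C ×_E D) ≅ q(C) ×_{q(E)} q(D). -/
/-!
STATEMENT 2: The connected components functor q : Cat → Set preserves fiber products
over discrete categories: if E is a discrete category and f : C → E, g : D → E are
functors, then the canonical map q(C ×_E D) → q(C) ×_{q(E)} q(D) is a bijection.
-/

open CategoryTheory Limits

universe u

lemma mapConnectedComponents_comp {J K L : Type u} [Category.{u} J] [Category.{u} K]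
    [Category.{u} L] (F : J ⥤ K) (G : K ⥤ L) (x : ConnectedComponents J) :
    (F ⋙ G).mapConnectedComponents x = G.mapConnectedComponents (F.mapConnectedComponents x) := by
  obtain ⟨a, rfl⟩ := Quotient.exists_rep x
  rfl

/-- The canonical comparison map from the connected components of the pullback to the
fiber product of the connected components. -/
noncomputable def qComparison (C D : Cat.{u, u}) (S : Type u)
    (f : C ⟶ Cat.of (Discrete S)) (g : D ⟶ Cat.of (Discrete S)) :
    ConnectedComponents ↥(pullback f g) →
      {y : ConnectedComponents ↥C × ConnectedComponents ↥D //
        (f.toFunctor : ↥C ⥤ Discrete S).mapConnectedComponents y.1 =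
          (g.toFunctor : ↥D ⥤ Discrete S).mapConnectedComponents y.2} :=
  fun x =>
    ⟨(((pullback.fst f g).toFunctor : ↥(pullback f g) ⥤ ↥C).mapConnectedComponents x,
      ((pullback.snd f g).toFunctor : ↥(pullback f g) ⥤ ↥D).mapConnectedComponents x), by
        rw [← mapConnectedComponents_comp, ← mapConnectedComponents_comp]
        have h : pullback.fst f g ≫ f = pullback.snd f g ≫ g := pullback.condition
        show (pullback.fst f g ≫ f).toFunctor.mapConnectedComponents x =
          (pullback.snd f g ≫ g).toFunctor.mapConnectedComponents x
        rw [h]⟩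

section Aux

lemma FullSubcategory.ext' {A : Type u} [Category.{u} A] {Z : A → Prop}
    {x y : ObjectProperty.FullSubcategory Z} (h : x.obj = y.obj) : x = y := by
  cases x; cases y; cases h; rfl

lemma discrete_zigzag_eq {S : Type u} {x y : Discrete S} (h : Zigzag x y) : x = y := by
  induction h with
  | refl => rfl
  | tail _ hzag ih =>
    rcases hzag with ⟨⟨φ⟩⟩ | ⟨⟨φ⟩⟩
    · exact ih.trans (Discrete.ext (Discrete.eq_of_hom φ))
    · exact ih.trans (Discrete.ext (Discrete.eq_of_hom φ).symm)

lemma discrete_const_of_zigzag {A : Type u} [Category.{u} A] {S : Type u}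
    (F : A ⥤ Discrete S) {a b : A} (h : Zigzag a b) : F.obj a = F.obj b :=
  discrete_zigzag_eq (zigzag_obj_of_zigzag F h)

lemma mapConnectedComponents_id {J : Type u} [Category.{u} J] (x : ConnectedComponents J) :
    (𝟭 J).mapConnectedComponents x = x := by
  obtain ⟨a, rfl⟩ := Quotient.exists_rep x
  rfl

variable (C D : Cat.{u, u}) (S : Type u)
  (f : C ⟶ Cat.of (Discrete S)) (g : D ⟶ Cat.of (Discrete S))

/-- The explicit pullback category: full subcategory of the product. -/
abbrev PbCat : Cat.{u, u} :=
  Cat.of (ObjectProperty.FullSubcategory fun p : ↥C × ↥D =>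
    (f.toFunctor : ↥C ⥤ Discrete S).obj p.1 = (g.toFunctor : ↥D ⥤ Discrete S).obj p.2)

def pbFst : PbCat C D S f g ⟶ C :=
  Cat.Hom.ofFunctor (ObjectProperty.ι _ ⋙ CategoryTheory.Prod.fst ↥C ↥D : ↥(PbCat C D S f g) ⥤ ↥C)

def pbSnd : PbCat C D S f g ⟶ D :=
  Cat.Hom.ofFunctor (ObjectProperty.ι _ ⋙ CategoryTheory.Prod.snd ↥C ↥D : ↥(PbCat C D S f g) ⥤ ↥D)

lemma pb_comm : pbFst C D S f g ≫ f = pbSnd C D S f g ≫ g := by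
  apply Cat.Hom.ext
  apply CategoryTheory.Functor.ext
  · intro X Y φ
    exact @Subsingleton.elim _ (Discrete.instSubsingletonDiscreteHom (α := S) _ _) _ _
  · intro p
    exact p.property

lemma mapCC_congr {A B : Cat.{u, u}} {F G : A ⟶ B} (h : F = G)
    (x : ConnectedComponents ↥A) :
    (F.toFunctor : ↥A ⥤ ↥B).mapConnectedComponents x = (G.toFunctor : ↥A ⥤ ↥B).mapConnectedComponents x := by
  rw [h]

/-- The functor from the abstract pullback to the explicit one. -/
noncomputable def pbU : (pullback f g : Cat.{u, u}) ⟶ PbCat C D S f g := Cat.Hom.ofFunctor {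
  obj x := ⟨(((pullback.fst f g).toFunctor : ↥(pullback f g) ⥤ ↥C).obj x,
      ((pullback.snd f g).toFunctor : ↥(pullback f g) ⥤ ↥D).obj x),
    Functor.congr_obj (congrArg Cat.Hom.toFunctor (pullback.condition (f := f) (g := g))) x⟩
  map φ := InducedCategory.homMk (((pullback.fst f g).toFunctor : ↥(pullback f g) ⥤ ↥C).map φ,
    ((pullback.snd f g).toFunctor : ↥(pullback f g) ⥤ ↥D).map φ)
  map_id x := by
    dsimp
    rw [CategoryTheory.Functor.map_id, CategoryTheory.Functor.map_id]
    rfl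
  map_comp φ ψ := by
    dsimp
    rw [CategoryTheory.Functor.map_comp, CategoryTheory.Functor.map_comp]
    rfl }

/-- The functor from the explicit pullback to the abstract one. -/
noncomputable def pbV : PbCat C D S f g ⟶ (pullback f g : Cat.{u, u}) :=
  pullback.lift (pbFst C D S f g) (pbSnd C D S f g) (pb_comm C D S f g)

lemma pbU_fst : pbU C D S f g ≫ pbFst C D S f g = pullback.fst f g := rfl

lemma pbU_snd : pbU C D S f g ≫ pbSnd C D S f g = pullback.snd f g := rfl

lemma pbU_pbV : pbU C D S f g ≫ pbV C D S f g = 𝟙 _ := by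
  apply pullback.hom_ext
  · rw [Category.assoc, Category.id_comp, pbV, pullback.lift_fst, pbU_fst]
  · rw [Category.assoc, Category.id_comp, pbV, pullback.lift_snd, pbU_snd]

lemma pbV_pbU_obj (p : ↥(PbCat C D S f g)) :
    (((pbV C D S f g).toFunctor : ↥(PbCat C D S f g) ⥤ ↥(pullback f g)) ⋙
      ((pbU C D S f g).toFunctor : ↥(pullback f g) ⥤ ↥(PbCat C D S f g))).obj p = p := by
  apply FullSubcategory.ext'
  apply Prod.ext
  · exact Functor.congr_obj (congrArg Cat.Hom.toFunctor (pullback.lift_fst (pbFst C D S f g) (pbSnd C D S f g)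
      (pb_comm C D S f g))) p
  · exact Functor.congr_obj (congrArg Cat.Hom.toFunctor (pullback.lift_snd (pbFst C D S f g) (pbSnd C D S f g)
      (pb_comm C D S f g))) p

/-- Lifting a zigzag in `C` to a zigzag in the explicit pullback, keeping the `D`
component fixed. -/
lemma zigzag_lift_left {a a' : ↥C} {d : ↥D} (h : Zigzag a a')
    (ha : (f.toFunctor : ↥C ⥤ Discrete S).obj a = (g.toFunctor : ↥D ⥤ Discrete S).obj d)
    (ha' : (f.toFunctor : ↥C ⥤ Discrete S).obj a' = (g.toFunctor : ↥D ⥤ Discrete S).obj d) :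
    Zigzag (J := ↥(PbCat C D S f g)) ⟨(a, d), ha⟩ ⟨(a', d), ha'⟩ := by
  induction h with
  | refl => rfl
  | @tail b c hab hzag ih =>
    have hb : (f.toFunctor : ↥C ⥤ Discrete S).obj b = (g.toFunctor : ↥D ⥤ Discrete S).obj d := by
      rw [← discrete_const_of_zigzag (f.toFunctor : ↥C ⥤ Discrete S) hab, ha]
    refine (ih hb).trans (Zigzag.of_zag ?_)
    rcases hzag with ⟨⟨φ⟩⟩ | ⟨⟨φ⟩⟩
    · exact Or.inl ⟨(InducedCategory.homMk (φ, 𝟙 d) : (⟨(b, d), hb⟩ : ↥(PbCat C D S f g)) ⟶ ⟨(c, d), ha'⟩)⟩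
    · exact Or.inr ⟨(InducedCategory.homMk (φ, 𝟙 d) : (⟨(c, d), ha'⟩ : ↥(PbCat C D S f g)) ⟶ ⟨(b, d), hb⟩)⟩

/-- Lifting a zigzag in `D` to a zigzag in the explicit pullback, keeping the `C`
component fixed. -/
lemma zigzag_lift_right {a : ↥C} {d d' : ↥D} (h : Zigzag d d')
    (hd : (f.toFunctor : ↥C ⥤ Discrete S).obj a = (g.toFunctor : ↥D ⥤ Discrete S).obj d)
    (hd' : (f.toFunctor : ↥C ⥤ Discrete S).obj a = (g.toFunctor : ↥D ⥤ Discrete S).obj d') :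
    Zigzag (J := ↥(PbCat C D S f g)) ⟨(a, d), hd⟩ ⟨(a, d'), hd'⟩ := by
  induction h with
  | refl => rfl
  | @tail b c hdb hzag ih =>
    have hb : (f.toFunctor : ↥C ⥤ Discrete S).obj a = (g.toFunctor : ↥D ⥤ Discrete S).obj b := by
      rw [hd, discrete_const_of_zigzag (g.toFunctor : ↥D ⥤ Discrete S) hdb]
    refine (ih hb).trans (Zigzag.of_zag ?_)
    rcases hzag with ⟨⟨φ⟩⟩ | ⟨⟨φ⟩⟩
    · exact Or.inl ⟨(InducedCategory.homMk (𝟙 a, φ) : (⟨(a, b), hb⟩ : ↥(PbCat C D S f g)) ⟶ ⟨(a, c), hd'⟩)⟩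
    · exact Or.inr ⟨(InducedCategory.homMk (𝟙 a, φ) : (⟨(a, c), hd'⟩ : ↥(PbCat C D S f g)) ⟶ ⟨(a, b), hb⟩)⟩

/-- The explicit comparison map. -/
noncomputable def ePb : ConnectedComponents ↥(PbCat C D S f g) →
    {y : ConnectedComponents ↥C × ConnectedComponents ↥D //
      (f.toFunctor : ↥C ⥤ Discrete S).mapConnectedComponents y.1 =
        (g.toFunctor : ↥D ⥤ Discrete S).mapConnectedComponents y.2} :=
  fun x =>
    ⟨(((pbFst C D S f g).toFunctor : ↥(PbCat C D S f g) ⥤ ↥C).mapConnectedComponents x,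
      ((pbSnd C D S f g).toFunctor : ↥(PbCat C D S f g) ⥤ ↥D).mapConnectedComponents x), by
        rw [← mapConnectedComponents_comp, ← mapConnectedComponents_comp]
        show (pbFst C D S f g ≫ f).toFunctor.mapConnectedComponents x =
          (pbSnd C D S f g ≫ g).toFunctor.mapConnectedComponents x
        rw [pb_comm]⟩

lemma ePb_bijective : Function.Bijective (ePb C D S f g) := by
  constructor
  · intro x y h
    obtain ⟨p, rfl⟩ := Quotient.exists_rep x
    obtain ⟨q, rfl⟩ := Quotient.exists_rep y
    have h1 : Zigzag p.obj.1 q.obj.1 :=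
      Quotient.exact (s := Zigzag.setoid _) (congrArg (fun z => z.1.1) h)
    have h2 : Zigzag p.obj.2 q.obj.2 :=
      Quotient.exact (s := Zigzag.setoid _) (congrArg (fun z => z.1.2) h)
    apply Quotient.sound
    have hmid : (f.toFunctor : ↥C ⥤ Discrete S).obj q.obj.1 = (g.toFunctor : ↥D ⥤ Discrete S).obj p.obj.2 := by
      rw [← discrete_const_of_zigzag (f.toFunctor : ↥C ⥤ Discrete S) h1]
      exact p.property
    have step1 : Zigzag (J := ↥(PbCat C D S f g)) ⟨(p.obj.1, p.obj.2), p.property⟩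
        ⟨(q.obj.1, p.obj.2), hmid⟩ :=
      zigzag_lift_left C D S f g h1 p.property hmid
    have step2 : Zigzag (J := ↥(PbCat C D S f g)) ⟨(q.obj.1, p.obj.2), hmid⟩
        ⟨(q.obj.1, q.obj.2), q.property⟩ :=
      zigzag_lift_right C D S f g h2 hmid q.property
    exact step1.trans step2
  · rintro ⟨⟨cx, cy⟩, h⟩
    obtain ⟨c, rfl⟩ := Quotient.exists_rep cx
    obtain ⟨d, rfl⟩ := Quotient.exists_rep cy
    have h' : (f.toFunctor : ↥C ⥤ Discrete S).obj c = (g.toFunctor : ↥D ⥤ Discrete S).obj d :=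
      discrete_zigzag_eq (Quotient.exact h)
    exact ⟨Quotient.mk _ ⟨(c, d), h'⟩, rfl⟩

lemma pbU_mapCC_bijective :
    Function.Bijective
      (((pbU C D S f g).toFunctor : ↥(pullback f g) ⥤ ↥(PbCat C D S f g)).mapConnectedComponents) := by
  apply Function.bijective_iff_has_inverse.mpr
  refine ⟨((pbV C D S f g).toFunctor : ↥(PbCat C D S f g) ⥤ ↥(pullback f g)).mapConnectedComponents, ?_, ?_⟩
  · intro x
    rw [← mapConnectedComponents_comp]
    exact (mapCC_congr (pbU_pbV C D S f g) x).trans (mapConnectedComponents_id x)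
  · intro x
    obtain ⟨p, rfl⟩ := Quotient.exists_rep x
    refine (mapConnectedComponents_comp _ _ _).symm.trans ?_
    exact congrArg (Quotient.mk _) (pbV_pbU_obj C D S f g p)

lemma qComparison_eq :
    qComparison C D S f g = (ePb C D S f g) ∘
      (((pbU C D S f g).toFunctor : ↥(pullback f g) ⥤ ↥(PbCat C D S f g)).mapConnectedComponents) := by
  funext x
  apply Subtype.ext
  apply Prod.ext
  · show ((pullback.fst f g).toFunctor : ↥(pullback f g) ⥤ ↥C).mapConnectedComponents x = _
    rw [← pbU_fst C D S f g]
    exact mapConnectedComponents_comp _ _ x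
  · show ((pullback.snd f g).toFunctor : ↥(pullback f g) ⥤ ↥D).mapConnectedComponents x = _
    rw [← pbU_snd C D S f g]
    exact mapConnectedComponents_comp _ _ x

end Aux

theorem connectedComponents_pullback_over_discrete_bijective
    (C D : Cat.{u, u}) (S : Type u)
    (f : C ⟶ Cat.of (Discrete S)) (g : D ⟶ Cat.of (Discrete S)) :
    Function.Bijective (qComparison C D S f g) := by
  rw [qComparison_eq]
  exact (ePb_bijective C D S f g).comp (pbU_mapCC_bijective C D S f g)
end

section
/- If C is an equivalence relation (a category equivalent to a discrete category), then the décalage Dec C is also equivalent to a discrete category, and the functor d_1 : Dec C → C is an isofibration which is surjective on objects. -/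
/-!
STATEMENT 8: If C is an equivalence relation (a homotopically discrete category, i.e.
the kernel groupoid A[f] of a surjective map of sets f : A → B), then the décalage
Dec C = (A ×_B A)[d₀] is also equivalent to a discrete category, and the functor
d₁ : Dec C → C is an isofibration which is surjective on objects.
-/

open CategoryTheory

universe u

/-- A functor is an isofibration if every isomorphism in the target whose source is in
the image of the functor lifts to an isomorphism in the source. -/
def IsIsofibration {C : Type*} {D : Type*} [Category C] [Category D] (F : C ⥤ D) : Prop :=
  ∀ (c : C) (d : D) (e : F.obj c ≅ d), ∃ (c' : C) (e' : c ≅ c') (h : F.obj c' = d),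
    F.mapIso e' ≪≫ eqToIso h = e

/-- The kernel category `A[f]` of a map of sets `f : A → B`: objects are the elements
of `A`, and there is a unique morphism `x ⟶ y` if and only if `f x = f y`. -/
structure KernelCat {A B : Type u} (f : A → B) : Type u where
  pt : A

instance {A B : Type u} (f : A → B) : Category (KernelCat f) where
  Hom x y := PLift (f x.pt = f y.pt)
  id _ := ⟨rfl⟩
  comp g h := ⟨g.down.trans h.down⟩
  id_comp _ := rfl
  comp_id _ := rfl
  assoc _ _ _ := rfl

/-- The décalage of the kernel category `A[f]`: the kernel category of the first
projection `d₀ : A ×_B A → A`. -/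
def DecKernelCat {A B : Type u} (f : A → B) : Type u :=
  KernelCat (fun p : {p : A × A // f p.1 = f p.2} => p.val.1)

instance {A B : Type u} (f : A → B) : Category (DecKernelCat f) :=
  inferInstanceAs (Category (KernelCat _))

/-- The functor `d₁ : Dec A[f] → A[f]`, sending a pair `(x, y)` to `y`. -/
def decD₁ {A B : Type u} (f : A → B) : DecKernelCat f ⥤ KernelCat f where
  obj q := ⟨q.pt.val.2⟩
  map {q q'} g := ⟨q.pt.prop.symm.trans ((congrArg f g.down).trans q'.pt.prop)⟩
  map_id _ := rfl
  map_comp _ _ := rfl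


instance {A B : Type u} (f : A → B) (x y : KernelCat f) : Subsingleton (x ⟶ y) :=
  ⟨fun ⟨_⟩ ⟨_⟩ => rfl⟩

instance {A B : Type u} (f : A → B) (x y : DecKernelCat f) : Subsingleton (x ⟶ y) :=
  inferInstanceAs (Subsingleton (PLift _))

/-- Décalage objects as a kernel category: hom iff first coordinates agree. -/
def decEquivDiscrete {A B : Type u} (f : A → B) : DecKernelCat f ≌ Discrete A where
  functor :=
    { obj := fun q => ⟨q.pt.val.1⟩
      map := fun {q q'} g => eqToHom (congrArg Discrete.mk g.down)
      map_id := fun _ => rfl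
      map_comp := fun _ _ => by simp }
  inverse :=
    { obj := fun a => ⟨⟨(a.as, a.as), rfl⟩⟩
      map := fun {a a'} g => ⟨Discrete.eq_of_hom g⟩
      map_id := fun _ => rfl
      map_comp := fun _ _ => rfl }
  unitIso := NatIso.ofComponents
    (fun q => { hom := ⟨rfl⟩, inv := ⟨rfl⟩,
                hom_inv_id := Subsingleton.elim _ _,
                inv_hom_id := Subsingleton.elim _ _ })
    (fun _ => Subsingleton.elim _ _)
  counitIso := NatIso.ofComponents
    (fun a => eqToIso (by cases a; rfl))
    (fun _ => Subsingleton.elim _ _)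
  functor_unitIso_comp := fun _ => Subsingleton.elim _ _

theorem dec_of_hoDiscrete_hoDiscrete_and_d₁_isofibration_surjective
    (A B : Type u) (f : A → B) (hf : Function.Surjective f) :
    (∃ S : Type u, Nonempty (DecKernelCat f ≌ Discrete S)) ∧
    IsIsofibration (decD₁ f) ∧
    Function.Surjective (decD₁ f).obj := by
  refine ⟨⟨A, ⟨decEquivDiscrete f⟩⟩, ?_, ?_⟩
  · intro c d e
    have he : f c.pt.val.2 = f d.pt := e.hom.down
    refine ⟨⟨⟨(c.pt.val.1, d.pt), c.pt.prop.trans he⟩⟩,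
      { hom := ⟨rfl⟩, inv := ⟨rfl⟩,
        hom_inv_id := Subsingleton.elim _ _,
        inv_hom_id := rfl }, rfl, ?_⟩
    apply Iso.ext
    apply Subsingleton.elim
  · intro y
    exact ⟨⟨⟨(y.pt, y.pt), rfl⟩⟩, rfl⟩
end

section
/- Let A be a category equivalent to a discrete category, B and C sets, g : dC → dB a functor between the corresponding discrete categories, and h : A → dB a functor. Then the pullback Q = dC ×_{dB} A in Cat is equivalent to a discrete category. -/
/-!
STATEMENT 10: Let A be a category equivalent to a discrete category, B and C sets,
g : dC → dB a functor between the corresponding discrete categories, and h : A → dB a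
functor. Then the pullback Q = dC ×_{dB} A in Cat is equivalent to a discrete category.
-/

open CategoryTheory Limits

universe u

/-- A category is homotopically discrete if it is equivalent to a discrete category. -/
def HoDiscrete (C : Type u) [Category.{u} C] : Prop :=
  ∃ S : Type u, Nonempty (C ≌ Discrete S)

section Aux

variable {Q : Type u} [Category.{u} Q]

/-- A thin category in which every morphism forces equality of objects is equivalent to
the discrete category on its objects. -/
noncomputable def equivDiscreteOfEqOfHom [Quiver.IsThin Q]
    (h : ∀ {X Y : Q}, (X ⟶ Y) → X = Y) : Q ≌ Discrete Q :=
  CategoryTheory.Equivalence.mk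
    { obj := fun X => ⟨X⟩
      map := fun f => eqToHom (congrArg Discrete.mk (h f))
      map_id := fun _ => Subsingleton.elim _ _
      map_comp := fun _ _ => Subsingleton.elim _ _ }
    (Discrete.functor fun x => x)
    (NatIso.ofComponents (fun X => Iso.refl _) (fun _ => Subsingleton.elim _ _))
    (NatIso.ofComponents (fun X => Iso.refl _) (fun _ => Subsingleton.elim _ _))

/-- A thin category all of whose morphisms are isomorphisms is homotopically discrete. -/
lemma hoDiscrete_of_thin_of_isIso (thin : ∀ X Y : Q, Subsingleton (X ⟶ Y))
    (grp : ∀ {X Y : Q} (f : X ⟶ Y), IsIso f) : HoDiscrete Q := by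
  haveI : Quiver.IsThin Q := thin
  haveI thinSk : Quiver.IsThin (Skeleton Q) := fun X Y =>
    ⟨fun f f' => (fromSkeleton Q).map_injective ((thin _ _).elim _ _)⟩
  have key : ∀ {X Y : Skeleton Q}, (X ⟶ Y) → X = Y := by
    intro X Y f
    haveI := grp ((fromSkeleton Q).map f)
    have : IsIso f := isIso_of_reflects_iso f (fromSkeleton Q)
    exact skeleton_skeletal Q ⟨asIso f⟩
  exact ⟨Skeleton Q, ⟨(skeletonEquivalence Q).symm.trans (equivDiscreteOfEqOfHom key)⟩⟩

end Aux

section LimitLemmas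

variable {J : Type u} [SmallCategory J] (F : J ⥤ Cat.{u, u})

lemma limitCat_thin
    (thin : ∀ (j : J) (X Y : F.obj j), Subsingleton (X ⟶ Y))
    (X Y : limit (F ⋙ Cat.objects.{u, u})) : Subsingleton (X ⟶ Y) := by
  constructor
  intro f g
  apply Types.limit_ext.{u, u}
  intro j
  exact (thin j _ _).elim _ _

lemma limitCat_isIso
    (thin : ∀ (j : J) (X Y : F.obj j), Subsingleton (X ⟶ Y))
    (giso : ∀ (j : J) {X Y : F.obj j} (f : X ⟶ Y), IsIso f)
    {X Y : limit (F ⋙ Cat.objects.{u, u})} (f : X ⟶ Y) : IsIso f := by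
  let finv : Y ⟶ X :=
    Types.Limit.mk.{u, u} (Cat.HasLimits.homDiagram Y X)
      (fun j =>
        haveI := giso j (limit.π (Cat.HasLimits.homDiagram X Y) j f)
        @CategoryTheory.inv _ _ _ _ (limit.π (Cat.HasLimits.homDiagram X Y) j f) (giso j _))
      (fun j j' h => (thin j' _ _).elim _ _)
  exact ⟨finv, (limitCat_thin F thin X X).elim _ _, (limitCat_thin F thin Y Y).elim _ _⟩

end LimitLemmas

theorem pullback_discrete_hoDiscrete_is_hoDiscrete
    (A : Cat.{u, u}) (B C : Type u)
    (g : Cat.of (Discrete C) ⟶ Cat.of (Discrete B))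
    (h : A ⟶ Cat.of (Discrete B))
    (hA : HoDiscrete ↥A) :
    HoDiscrete ↥(pullback g h) := by
  obtain ⟨S, ⟨eA⟩⟩ := hA
  have thinA : ∀ X Y : A, Subsingleton (X ⟶ Y) := fun X Y =>
    ⟨fun f f' => eA.functor.map_injective (Subsingleton.elim _ _)⟩
  have isoA : ∀ {X Y : A} (f : X ⟶ Y), IsIso f := fun f => by
    haveI : IsIso (eA.functor.map f) := inferInstance
    exact isIso_of_reflects_iso f eA.functor
  have thinJ : ∀ (j : WalkingCospan) (X Y : (cospan g h).obj j), Subsingleton (X ⟶ Y) := by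
    rintro (_ | _ | _) X Y
    · exact inferInstanceAs (Subsingleton ((show Discrete B from X) ⟶ (show Discrete B from Y)))
    · exact inferInstanceAs (Subsingleton ((show Discrete C from X) ⟶ (show Discrete C from Y)))
    · exact thinA X Y
  have isoJ : ∀ (j : WalkingCospan) {X Y : (cospan g h).obj j} (f : X ⟶ Y), IsIso f := by
    rintro (_ | _ | _) X Y f
    · exact inferInstanceAs
        (IsIso (show (show Discrete B from X) ⟶ (show Discrete B from Y) from f))
    · exact inferInstanceAs
        (IsIso (show (show Discrete C from X) ⟶ (show Discrete C from Y) from f))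
    · exact isoA f
  let e : WalkingCospan ≌ ULiftHom.{u} (ULift.{u} WalkingCospan) :=
    ULiftHomULiftCategory.equiv.{u, u} WalkingCospan
  let G : ULiftHom.{u} (ULift.{u} WalkingCospan) ⥤ Cat.{u, u} := e.inverse ⋙ cospan g h
  let iso1 : limit (cospan g h) ≅ limit G :=
    HasLimit.isoOfEquivalence e (e.funInvIdAssoc (cospan g h))
  let iso2 : limit G ≅ Cat.HasLimits.limitConeX G :=
    limit.isoLimitCone ⟨_, Cat.HasLimits.limitConeIsLimit G⟩
  have thinG : ∀ (j) (X Y : G.obj j), Subsingleton (X ⟶ Y) := fun j =>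
    thinJ (e.inverse.obj j)
  have isoG : ∀ (j) {X Y : G.obj j} (f : X ⟶ Y), IsIso f := fun j =>
    isoJ (e.inverse.obj j)
  have hQ : HoDiscrete ↥(Cat.HasLimits.limitConeX G) :=
    hoDiscrete_of_thin_of_isIso (limitCat_thin G thinG)
      (fun f => limitCat_isIso G thinG isoG f)
  obtain ⟨S', ⟨eq'⟩⟩ := hQ
  exact ⟨S', ⟨(Cat.equivOfIso (iso1 ≪≫ iso2)).trans eq'⟩⟩
end

section
/- Let C be a category with finite limits, X an internal category in C, f_0 : Y_0 → X_0 a morphism, and X(f_0) the internal category obtained by pulling back X along f_0. Then for each k ≥ 2 there is a pullback square in C expressing X(f_0)_k = X(f_0)_1 ×_{Y_0} ⋯ ×_{Y_0} X(f_0)_1 as the pullback of X_k = X_1 ×_{X_0} ⋯ ×_{X_0} X_1 along the (k+1)-fold product map f_0 × ⋯ × f_0 : Y_0^{k+1} → X_0^{k+1}. -/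
/-!
STATEMENT 13: Let C be a category with finite limits, X an internal category in C,
f₀ : Y₀ → X₀ a morphism, and X(f₀) the internal category obtained by pulling back X
along f₀. Then for each k ≥ 2 there is a pullback square in C expressing
X(f₀)_k = X(f₀)₁ ×_{Y₀} ⋯ ×_{Y₀} X(f₀)₁ as the pullback of
X_k = X₁ ×_{X₀} ⋯ ×_{X₀} X₁ along the (k+1)-fold product map f₀ × ⋯ × f₀ :
Y₀^{k+1} → X₀^{k+1}.
-/

open CategoryTheory Limits

universe v u

/-- An internal category in a category `C` with pullbacks: an object of objects `X₀`,
an object of morphisms `X₁`, source and target maps, an identity map and a composition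
map, satisfying the usual axioms of a category. In `pullback tgt src`, the first
component is the first morphism of a composable pair and the second component is the
second. -/
structure InternalCategory (C : Type u) [Category.{v} C] [HasPullbacks C] where
  X₀ : C
  X₁ : C
  src : X₁ ⟶ X₀
  tgt : X₁ ⟶ X₀
  ide : X₀ ⟶ X₁
  comp : pullback tgt src ⟶ X₁
  ide_src : ide ≫ src = 𝟙 X₀
  ide_tgt : ide ≫ tgt = 𝟙 X₀
  comp_src : comp ≫ src = pullback.fst tgt src ≫ src
  comp_tgt : comp ≫ tgt = pullback.snd tgt src ≫ tgt
  id_comp :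
    pullback.lift (src ≫ ide) (𝟙 X₁)
      (by rw [Category.assoc, ide_tgt, Category.comp_id, Category.id_comp]) ≫ comp = 𝟙 X₁
  comp_id :
    pullback.lift (𝟙 X₁) (tgt ≫ ide)
      (by rw [Category.id_comp, Category.assoc, ide_src, Category.comp_id]) ≫ comp = 𝟙 X₁
  assoc :
    pullback.lift (pullback.fst (pullback.snd tgt src ≫ tgt) src ≫ comp)
      (pullback.snd (pullback.snd tgt src ≫ tgt) src)
      (by rw [Category.assoc, comp_tgt, ← Category.assoc]
          simpa using pullback.condition) ≫ comp =
    pullback.lift (pullback.fst (pullback.snd tgt src ≫ tgt) src ≫ pullback.fst tgt src)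
      (pullback.lift (pullback.fst (pullback.snd tgt src ≫ tgt) src ≫ pullback.snd tgt src)
        (pullback.snd (pullback.snd tgt src ≫ tgt) src)
        (by rw [Category.assoc]; exact pullback.condition) ≫ comp)
      (by conv_lhs => rw [Category.assoc, pullback.condition, ← Category.assoc]
          conv_rhs => rw [Category.assoc, comp_src, ← Category.assoc, pullback.lift_fst]) ≫
      comp

/-- The iterated fiber product `Z₁ ×_{Z₀} Z₁ ×_{Z₀} ⋯ ×_{Z₀} Z₁` (`k` factors) of a
graph `s, t : Z₁ ⟶ Z₀`, together with the "last vertex" map to `Z₀`. -/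
noncomputable def fibChain {C : Type u} [Category.{v} C] [HasPullbacks C]
    (Z₀ Z₁ : C) (s t : Z₁ ⟶ Z₀) : (k : ℕ) → Σ' (P : C), P ⟶ Z₀
  | 0 => ⟨Z₀, 𝟙 Z₀⟩
  | 1 => ⟨Z₁, t⟩
  | (k+2) => ⟨pullback (fibChain Z₀ Z₁ s t (k+1)).2 s, pullback.snd _ _ ≫ t⟩

/-- The `i`-th vertex map of the iterated fiber product. -/
noncomputable def chainVertex {C : Type u} [Category.{v} C] [HasPullbacks C]
    (Z₀ Z₁ : C) (s t : Z₁ ⟶ Z₀) :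
    (k : ℕ) → (i : Fin (k + 1)) → ((fibChain Z₀ Z₁ s t k).1 ⟶ Z₀)
  | 0, _ => 𝟙 Z₀
  | 1, i => if i = 0 then s else t
  | (k+2), i =>
      if h : i.val ≤ k + 1 then
        pullback.fst _ _ ≫ chainVertex Z₀ Z₁ s t (k+1) ⟨i.val, by omega⟩
      else pullback.snd _ _ ≫ t

section

variable {C : Type u} [Category.{v} C] [HasFiniteLimits C]
  (X : InternalCategory C) {Y₀ : C} (f₀ : Y₀ ⟶ X.X₀)

lemma fst_comp_src :
    pullback.fst (prod.lift X.src X.tgt) (prod.map f₀ f₀) ≫ X.src =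
      (pullback.snd (prod.lift X.src X.tgt) (prod.map f₀ f₀) ≫ prod.fst) ≫ f₀ := by
  have h := pullback.condition (f := prod.lift X.src X.tgt) (g := prod.map f₀ f₀)
  calc pullback.fst (prod.lift X.src X.tgt) (prod.map f₀ f₀) ≫ X.src
      = pullback.fst (prod.lift X.src X.tgt) (prod.map f₀ f₀) ≫
          prod.lift X.src X.tgt ≫ prod.fst := by rw [prod.lift_fst]
    _ = (pullback.snd (prod.lift X.src X.tgt) (prod.map f₀ f₀) ≫ prod.map f₀ f₀) ≫
          prod.fst := by rw [← Category.assoc, h]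
    _ = pullback.snd (prod.lift X.src X.tgt) (prod.map f₀ f₀) ≫ prod.fst ≫ f₀ := by
          rw [Category.assoc, prod.map_fst]
    _ = (pullback.snd (prod.lift X.src X.tgt) (prod.map f₀ f₀) ≫ prod.fst) ≫ f₀ := by
          rw [Category.assoc]

lemma fst_comp_tgt :
    pullback.fst (prod.lift X.src X.tgt) (prod.map f₀ f₀) ≫ X.tgt =
      (pullback.snd (prod.lift X.src X.tgt) (prod.map f₀ f₀) ≫ prod.snd) ≫ f₀ := by
  have h := pullback.condition (f := prod.lift X.src X.tgt) (g := prod.map f₀ f₀)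
  calc pullback.fst (prod.lift X.src X.tgt) (prod.map f₀ f₀) ≫ X.tgt
      = pullback.fst (prod.lift X.src X.tgt) (prod.map f₀ f₀) ≫
          prod.lift X.src X.tgt ≫ prod.snd := by rw [prod.lift_snd]
    _ = (pullback.snd (prod.lift X.src X.tgt) (prod.map f₀ f₀) ≫ prod.map f₀ f₀) ≫
          prod.snd := by rw [← Category.assoc, h]
    _ = pullback.snd (prod.lift X.src X.tgt) (prod.map f₀ f₀) ≫ prod.snd ≫ f₀ := by
          rw [Category.assoc, prod.map_snd]
    _ = (pullback.snd (prod.lift X.src X.tgt) (prod.map f₀ f₀) ≫ prod.snd) ≫ f₀ := by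
          rw [Category.assoc]

/-- The canonical map from the iterated fiber product of the base change `X(f₀)` to
the iterated fiber product of `X`, together with its compatibility with the
last-vertex maps. -/
noncomputable def baseChangeChainMap : (k : ℕ) →
    Σ' (φ : (fibChain Y₀ (pullback (prod.lift X.src X.tgt) (prod.map f₀ f₀))
        (pullback.snd (prod.lift X.src X.tgt) (prod.map f₀ f₀) ≫ prod.fst)
        (pullback.snd (prod.lift X.src X.tgt) (prod.map f₀ f₀) ≫ prod.snd) k).1 ⟶
          (fibChain X.X₀ X.X₁ X.src X.tgt k).1),
      (fibChain Y₀ (pullback (prod.lift X.src X.tgt) (prod.map f₀ f₀))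
        (pullback.snd (prod.lift X.src X.tgt) (prod.map f₀ f₀) ≫ prod.fst)
        (pullback.snd (prod.lift X.src X.tgt) (prod.map f₀ f₀) ≫ prod.snd) k).2 ≫ f₀ =
        φ ≫ (fibChain X.X₀ X.X₁ X.src X.tgt k).2
  | 0 => ⟨f₀, by simp [fibChain]⟩
  | 1 => ⟨pullback.fst (prod.lift X.src X.tgt) (prod.map f₀ f₀),
      (fst_comp_tgt X f₀).symm⟩
  | (k+2) =>
    ⟨pullback.map _ _ _ _ (baseChangeChainMap (k+1)).1
      (pullback.fst (prod.lift X.src X.tgt) (prod.map f₀ f₀)) f₀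
      (baseChangeChainMap (k+1)).2 (fst_comp_src X f₀).symm, by
        show (pullback.snd _ _ ≫ _) ≫ f₀ = _ ≫ pullback.snd _ _ ≫ _
        conv_rhs => rw [← Category.assoc, pullback.lift_snd, Category.assoc, fst_comp_tgt X f₀]
        simp only [Category.assoc]⟩

/-! ### Auxiliary lemmas -/

lemma chainVertex_last' (Z₀ Z₁ : C) (s t : Z₁ ⟶ Z₀) (k : ℕ) :
    chainVertex Z₀ Z₁ s t k (Fin.last k) = (fibChain Z₀ Z₁ s t k).2 := by
  match k with
  | 0 => rfl
  | 1 =>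
    show (if (Fin.last 1) = 0 then s else t) = t
    rw [if_neg (by decide)]
  | (k+2) =>
    show (if h : (Fin.last (k+2)).val ≤ k + 1 then _ else
        pullback.snd _ _ ≫ t) = pullback.snd _ _ ≫ t
    exact dif_neg (by simp)

lemma chainVertex_castSucc' (Z₀ Z₁ : C) (s t : Z₁ ⟶ Z₀) (k : ℕ) (i : Fin (k+2)) :
    chainVertex Z₀ Z₁ s t (k+2) i.castSucc =
      pullback.fst (fibChain Z₀ Z₁ s t (k+1)).2 s ≫ chainVertex Z₀ Z₁ s t (k+1) i := by
  have h : (i.castSucc).val ≤ k + 1 := by rw [Fin.coe_castSucc]; omega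
  simp only [chainVertex, dif_pos h]
  rfl


lemma fibChain_succ_snd (Z₀ Z₁ : C) (s t : Z₁ ⟶ Z₀) (k : ℕ) :
    (fibChain Z₀ Z₁ s t (k+2)).2 =
      pullback.snd (fibChain Z₀ Z₁ s t (k+1)).2 s ≫ t := rfl

lemma fibChain_one_snd (Z₀ Z₁ : C) (s t : Z₁ ⟶ Z₀) :
    (fibChain Z₀ Z₁ s t 1).2 = t := rfl

lemma chainVertex_one (Z₀ Z₁ : C) (s t : Z₁ ⟶ Z₀) (i : Fin 2) :
    chainVertex Z₀ Z₁ s t 1 i = if i = 0 then s else t := rfl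

lemma comp_lift_eq {n : ℕ} {A W W' : C} (x : W ⟶ W') (p : Fin n → (W' ⟶ A))
    (y : W ⟶ ∏ᶜ fun _ : Fin n => A) (h : x ≫ Pi.lift p = y) (i : Fin n) :
    x ≫ p i = y ≫ Pi.π (fun _ : Fin n => A) i := by
  have h' := h =≫ Pi.π (fun _ : Fin n => A) i
  simpa using h'

lemma cone_component {n : ℕ} {A B W Wa : C} (a : W ⟶ Wa) (p : Fin n → (Wa ⟶ A))
    (b : W ⟶ ∏ᶜ fun _ : Fin n => B) (f : B ⟶ A)
    (h : a ≫ Pi.lift p = b ≫ (Limits.Pi.map fun _ : Fin n => f)) (i : Fin n) :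
    a ≫ p i = (b ≫ Pi.π (fun _ : Fin n => B) i) ≫ f := by
  have h' := h =≫ Pi.π (fun _ : Fin n => A) i
  simpa using h'

lemma baseChange_vertex_comm : ∀ (k : ℕ) (i : Fin (k+1)),
    (baseChangeChainMap X f₀ k).1 ≫ chainVertex X.X₀ X.X₁ X.src X.tgt k i =
      chainVertex Y₀ (pullback (prod.lift X.src X.tgt) (prod.map f₀ f₀))
        (pullback.snd (prod.lift X.src X.tgt) (prod.map f₀ f₀) ≫ prod.fst)
        (pullback.snd (prod.lift X.src X.tgt) (prod.map f₀ f₀) ≫ prod.snd) k i ≫ f₀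
  | 0, i => by
    show f₀ ≫ 𝟙 X.X₀ = 𝟙 Y₀ ≫ f₀
    simp
  | 1, i => by
    show pullback.fst _ _ ≫ (if i = 0 then X.src else X.tgt) =
      (if i = 0 then _ else _) ≫ f₀
    split
    · exact fst_comp_src X f₀
    · exact fst_comp_tgt X f₀
  | (k+2), i => by
    simp only [baseChangeChainMap, chainVertex]
    split
    · erw [← Category.assoc, pullback.lift_fst, Category.assoc,
        baseChange_vertex_comm (k+1) _, Category.assoc]
    · erw [← Category.assoc, pullback.lift_snd, Category.assoc, fst_comp_tgt X f₀]
      simp only [Category.assoc]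
      erw [Category.assoc, Category.assoc]

lemma baseChange_chain_comm (k : ℕ) :
    (baseChangeChainMap X f₀ k).1 ≫
        (Pi.lift fun i : Fin (k + 1) => chainVertex X.X₀ X.X₁ X.src X.tgt k i) =
      (Pi.lift fun i : Fin (k + 1) =>
          chainVertex Y₀ (pullback (prod.lift X.src X.tgt) (prod.map f₀ f₀))
            (pullback.snd (prod.lift X.src X.tgt) (prod.map f₀ f₀) ≫ prod.fst)
            (pullback.snd (prod.lift X.src X.tgt) (prod.map f₀ f₀) ≫ prod.snd) k i) ≫
        (Limits.Pi.map fun _ : Fin (k + 1) => f₀) := by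
  apply Pi.hom_ext
  intro i
  simp [baseChange_vertex_comm X f₀ k i]


lemma baseChange_w1 (k : ℕ) {W : C}
    (a : W ⟶ pullback (fibChain X.X₀ X.X₁ X.src X.tgt (k+1)).2 X.src)
    (b : W ⟶ ∏ᶜ fun _ : Fin (k+3) => Y₀)
    (hab : a ≫ (Pi.lift fun i : Fin (k+3) => chainVertex X.X₀ X.X₁ X.src X.tgt (k+2) i) =
      b ≫ Limits.Pi.map fun _ : Fin (k+3) => f₀) :
    (a ≫ pullback.fst (fibChain X.X₀ X.X₁ X.src X.tgt (k+1)).2 X.src) ≫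
        (Pi.lift fun i : Fin (k+2) => chainVertex X.X₀ X.X₁ X.src X.tgt (k+1) i) =
      (Pi.lift fun i : Fin (k+2) => b ≫ Pi.π (fun _ : Fin (k+3) => Y₀) i.castSucc) ≫
        Limits.Pi.map fun _ : Fin (k+2) => f₀ := by
  apply Pi.hom_ext
  intro i
  have h := cone_component a _ b f₀ hab i.castSucc
  rw [chainVertex_castSucc'] at h
  simpa using h

set_option maxHeartbeats 3200000 in
lemma baseChange_chain_isPullback_aux : ∀ (k : ℕ),
    IsPullback (baseChangeChainMap X f₀ (k+1)).1
      (Pi.lift fun i : Fin (k + 2) =>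
        chainVertex Y₀ (pullback (prod.lift X.src X.tgt) (prod.map f₀ f₀))
          (pullback.snd (prod.lift X.src X.tgt) (prod.map f₀ f₀) ≫ prod.fst)
          (pullback.snd (prod.lift X.src X.tgt) (prod.map f₀ f₀) ≫ prod.snd) (k+1) i)
      (Pi.lift fun i : Fin (k + 2) => chainVertex X.X₀ X.X₁ X.src X.tgt (k+1) i)
      (Limits.Pi.map fun _ : Fin (k + 2) => f₀) := by
  intro k
  induction k with
  | zero =>
    refine IsPullback.of_isLimit' ⟨baseChange_chain_comm X f₀ 1⟩
      (PullbackCone.IsLimit.mk _ (fun s => ?lift) (fun s => ?fl) (fun s => ?fr)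
        (fun s m hm₁ hm₂ => ?uq))
    case lift =>
      have hcomp : ∀ i : Fin 2, s.fst ≫ chainVertex X.X₀ X.X₁ X.src X.tgt 1 i =
          s.snd ≫ Pi.π _ i ≫ f₀ := by
        intro i
        have h := s.condition =≫ Pi.π _ i
        simpa using h
      refine pullback.lift s.fst
        (prod.lift (s.snd ≫ Pi.π _ 0) (s.snd ≫ Pi.π _ 1)) ?_
      apply Limits.prod.hom_ext
      · erw [Category.assoc, prod.lift_fst, Category.assoc, prod.map_fst,
          ← Category.assoc, prod.lift_fst]
        have h := hcomp 0
        rw [chainVertex_one, if_pos rfl] at h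
        exact h.trans (Category.assoc _ _ _).symm
      · erw [Category.assoc, prod.lift_snd, Category.assoc, prod.map_snd,
          ← Category.assoc, prod.lift_snd]
        have h := hcomp 1
        rw [chainVertex_one, if_neg (by decide)] at h
        exact h.trans (Category.assoc _ _ _).symm
    case fl => exact pullback.lift_fst _ _ _
    case fr =>
      apply Pi.hom_ext
      intro i
      refine (Category.assoc _ _ _).trans ((whisker_eq _ (Pi.lift_π _ _)).trans ?_)
      have h0 : chainVertex Y₀ (pullback (prod.lift X.src X.tgt) (prod.map f₀ f₀)) (pullback.snd (prod.lift X.src X.tgt) (prod.map f₀ f₀) ≫ prod.fst) (pullback.snd (prod.lift X.src X.tgt) (prod.map f₀ f₀) ≫ prod.snd) (0+1) i =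
          if i = 0 then (pullback.snd (prod.lift X.src X.tgt) (prod.map f₀ f₀) ≫ prod.fst) else (pullback.snd (prod.lift X.src X.tgt) (prod.map f₀ f₀) ≫ prod.snd) := rfl
      by_cases hi : i = 0
      · subst hi
        exact (Category.assoc _ _ _).symm.trans ((eq_whisker (pullback.lift_snd _ _ _) _).trans (prod.lift_fst _ _))
      · obtain rfl := Fin.eq_one_of_ne_zero i hi
        exact (Category.assoc _ _ _).symm.trans ((eq_whisker (pullback.lift_snd _ _ _) _).trans (prod.lift_snd _ _))
    case uq =>
      have key : ∀ i : Fin 2,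
          m ≫ chainVertex Y₀ (pullback (prod.lift X.src X.tgt) (prod.map f₀ f₀))
            (pullback.snd _ _ ≫ prod.fst) (pullback.snd _ _ ≫ prod.snd) 1 i =
            s.snd ≫ Pi.π _ i := by
        intro i
        have h := hm₂ =≫ Pi.π _ i
        simpa using h
      apply pullback.hom_ext
      · exact hm₁.trans (pullback.lift_fst _ _ _).symm
      · refine Eq.trans ?_ (pullback.lift_snd _ _ _).symm
        apply Limits.prod.hom_ext
        · rw [prod.lift_fst]
          have h := key 0
          rw [chainVertex_one, if_pos rfl] at h
          exact (Category.assoc _ _ _).trans h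
        · rw [prod.lift_snd]
          have h := key 1
          rw [chainVertex_one, if_neg (by decide)] at h
          exact (Category.assoc _ _ _).trans h
  | succ k ih =>
    show IsPullback (baseChangeChainMap X f₀ (k+2)).1
      (Pi.lift fun i : Fin (k + 3) =>
        chainVertex Y₀ (pullback (prod.lift X.src X.tgt) (prod.map f₀ f₀))
          (pullback.snd (prod.lift X.src X.tgt) (prod.map f₀ f₀) ≫ prod.fst)
          (pullback.snd (prod.lift X.src X.tgt) (prod.map f₀ f₀) ≫ prod.snd) (k+2) (i))
      (Pi.lift fun i : Fin (k + 3) => chainVertex X.X₀ X.X₁ X.src X.tgt (k+2) i)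
      (Limits.Pi.map fun _ : Fin (k + 3) => f₀)
    have hφfst : (baseChangeChainMap X f₀ (k+2)).1 ≫
        pullback.fst (fibChain X.X₀ X.X₁ X.src X.tgt (k+1)).2 X.src =
        pullback.fst (fibChain Y₀ (pullback (prod.lift X.src X.tgt) (prod.map f₀ f₀))
          (pullback.snd (prod.lift X.src X.tgt) (prod.map f₀ f₀) ≫ prod.fst)
          (pullback.snd (prod.lift X.src X.tgt) (prod.map f₀ f₀) ≫ prod.snd) (k+1)).2 (pullback.snd (prod.lift X.src X.tgt) (prod.map f₀ f₀) ≫ prod.fst) ≫ (baseChangeChainMap X f₀ (k+1)).1 := by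
      exact pullback.lift_fst _ _ _
    have hφsnd : (baseChangeChainMap X f₀ (k+2)).1 ≫
        pullback.snd (fibChain X.X₀ X.X₁ X.src X.tgt (k+1)).2 X.src =
        pullback.snd (fibChain Y₀ (pullback (prod.lift X.src X.tgt) (prod.map f₀ f₀))
          (pullback.snd (prod.lift X.src X.tgt) (prod.map f₀ f₀) ≫ prod.fst)
          (pullback.snd (prod.lift X.src X.tgt) (prod.map f₀ f₀) ≫ prod.snd) (k+1)).2 (pullback.snd (prod.lift X.src X.tgt) (prod.map f₀ f₀) ≫ prod.fst) ≫
          pullback.fst (prod.lift X.src X.tgt) (prod.map f₀ f₀) := by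
      exact pullback.lift_snd _ _ _
    have hlast2 : pullback.fst (fibChain Y₀ (pullback (prod.lift X.src X.tgt) (prod.map f₀ f₀))
          (pullback.snd (prod.lift X.src X.tgt) (prod.map f₀ f₀) ≫ prod.fst)
          (pullback.snd (prod.lift X.src X.tgt) (prod.map f₀ f₀) ≫ prod.snd) (k+1)).2 (pullback.snd (prod.lift X.src X.tgt) (prod.map f₀ f₀) ≫ prod.fst) ≫
        chainVertex Y₀ (pullback (prod.lift X.src X.tgt) (prod.map f₀ f₀))
          (pullback.snd (prod.lift X.src X.tgt) (prod.map f₀ f₀) ≫ prod.fst)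
          (pullback.snd (prod.lift X.src X.tgt) (prod.map f₀ f₀) ≫ prod.snd) (k+1) (Fin.last (k+1)) =
        pullback.snd (fibChain Y₀ (pullback (prod.lift X.src X.tgt) (prod.map f₀ f₀))
          (pullback.snd (prod.lift X.src X.tgt) (prod.map f₀ f₀) ≫ prod.fst)
          (pullback.snd (prod.lift X.src X.tgt) (prod.map f₀ f₀) ≫ prod.snd) (k+1)).2 (pullback.snd (prod.lift X.src X.tgt) (prod.map f₀ f₀) ≫ prod.fst) ≫ (pullback.snd (prod.lift X.src X.tgt) (prod.map f₀ f₀) ≫ prod.fst) := by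
      rw [chainVertex_last']
      exact pullback.condition
    have hlast3 : pullback.snd (fibChain Y₀ (pullback (prod.lift X.src X.tgt) (prod.map f₀ f₀))
          (pullback.snd (prod.lift X.src X.tgt) (prod.map f₀ f₀) ≫ prod.fst)
          (pullback.snd (prod.lift X.src X.tgt) (prod.map f₀ f₀) ≫ prod.snd) (k+1)).2 (pullback.snd (prod.lift X.src X.tgt) (prod.map f₀ f₀) ≫ prod.fst) ≫ (pullback.snd (prod.lift X.src X.tgt) (prod.map f₀ f₀) ≫ prod.snd) =
        chainVertex Y₀ (pullback (prod.lift X.src X.tgt) (prod.map f₀ f₀))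
          (pullback.snd (prod.lift X.src X.tgt) (prod.map f₀ f₀) ≫ prod.fst)
          (pullback.snd (prod.lift X.src X.tgt) (prod.map f₀ f₀) ≫ prod.snd) (k+2) (Fin.last (k+2)) :=
      ((chainVertex_last' _ _ _ _ (k+2)).trans (fibChain_succ_snd _ _ _ _ k)).symm
    refine IsPullback.of_isLimit' ⟨baseChange_chain_comm X f₀ (k+2)⟩
      (PullbackCone.IsLimit.mk _ (fun s => ?_) (fun s => ?_) (fun s => ?_)
        (fun s m hm₁ hm₂ => ?_))
    · -- lift
      refine pullback.lift
        (ih.lift (s.fst ≫ pullback.fst (fibChain X.X₀ X.X₁ X.src X.tgt (k+1)).2 X.src)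
          (Pi.lift fun i : Fin (k+2) => s.snd ≫ Pi.π (fun _ : Fin (k+3) => Y₀) i.castSucc)
          (baseChange_w1 X f₀ k s.fst s.snd s.condition))
        (pullback.lift (s.fst ≫ pullback.snd (fibChain X.X₀ X.X₁ X.src X.tgt (k+1)).2 X.src)
          (prod.lift (s.snd ≫ Pi.π (fun _ : Fin (k+3) => Y₀) (Fin.castSucc (Fin.last (k+1))))
            (s.snd ≫ Pi.π (fun _ : Fin (k+3) => Y₀) (Fin.last (k+2)))) ?_)
        ?_
      · apply Limits.prod.hom_ext
        · have h := cone_component s.fst _ s.snd f₀ s.condition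
            (Fin.castSucc (Fin.last (k+1)))
          rw [chainVertex_castSucc', chainVertex_last', pullback.condition] at h
          have e1 : ∀ (a : s.pt ⟶ X.X₁), (a ≫ prod.lift X.src X.tgt) ≫ prod.fst = a ≫ X.src := by
            intro a; rw [Category.assoc, prod.lift_fst]
          have e2 : ∀ (a b : s.pt ⟶ Y₀), (prod.lift a b ≫ prod.map f₀ f₀) ≫ prod.fst = a ≫ f₀ := by
            intro a b; rw [Category.assoc, prod.map_fst, ← Category.assoc, prod.lift_fst]
          exact (e1 _).trans ((Category.assoc _ _ _).trans (h.trans (e2 _ _).symm))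
        · have h := cone_component s.fst _ s.snd f₀ s.condition (Fin.last (k+2))
          rw [chainVertex_last', fibChain_succ_snd] at h
          have e1 : ∀ (a : s.pt ⟶ X.X₁), (a ≫ prod.lift X.src X.tgt) ≫ prod.snd = a ≫ X.tgt := by
            intro a; rw [Category.assoc, prod.lift_snd]
          have e2 : ∀ (a b : s.pt ⟶ Y₀), (prod.lift a b ≫ prod.map f₀ f₀) ≫ prod.snd = b ≫ f₀ := by
            intro a b; rw [Category.assoc, prod.map_snd, ← Category.assoc, prod.lift_snd]
          exact (e1 _).trans ((Category.assoc _ _ _).trans (h.trans (e2 _ _).symm))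
      · trans (s.snd ≫ Pi.π (fun _ : Fin (k+3) => Y₀) (Fin.castSucc (Fin.last (k+1))))
        · have h := comp_lift_eq (ih.lift _ _ _) _ _
            (ih.lift_snd _ _ (baseChange_w1 X f₀ k s.fst s.snd s.condition)) (Fin.last (k+1))
          rw [chainVertex_last'] at h
          rw [Pi.lift_π] at h
          exact h
        · symm
          rw [← Category.assoc, pullback.lift_snd, prod.lift_fst]
    · -- fac_left
      apply pullback.hom_ext
      · exact (Category.assoc _ _ _).trans ((whisker_eq _ hφfst).trans ((Category.assoc _ _ _).symm.trans ((eq_whisker (pullback.lift_fst _ _ _) _).trans (ih.lift_fst _ _ _))))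
      · exact (Category.assoc _ _ _).trans ((whisker_eq _ hφsnd).trans ((Category.assoc _ _ _).symm.trans ((eq_whisker (pullback.lift_snd _ _ _) _).trans (pullback.lift_fst _ _ _))))
    · -- fac_right
      apply Pi.hom_ext
      intro i
      beta_reduce
      refine (Category.assoc _ _ _).trans ((whisker_eq _ (Pi.lift_π _ _)).trans ?_)
      induction i using Fin.lastCases with
      | last =>
        exact (whisker_eq _ ((chainVertex_last' _ _ _ _ (k+2)).trans (fibChain_succ_snd _ _ _ _ k))).trans ((Category.assoc _ _ _).symm.trans ((eq_whisker (pullback.lift_snd _ _ _) _).trans ((Category.assoc _ _ _).symm.trans ((eq_whisker (pullback.lift_snd _ _ _) _).trans (prod.lift_snd _ _)))))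
      | cast j =>
        exact (whisker_eq _ (chainVertex_castSucc' _ _ _ _ k j)).trans ((Category.assoc _ _ _).symm.trans ((eq_whisker (pullback.lift_fst _ _ _) _).trans ((comp_lift_eq (ih.lift _ _ _) _ _
            (ih.lift_snd _ _ (baseChange_w1 X f₀ k s.fst s.snd s.condition)) j).trans (Pi.lift_π _ _))))
    · -- uniq
      have hmv := fun i : Fin (k+3) => comp_lift_eq m _ s.snd hm₂ i
      apply pullback.hom_ext
      · rw [pullback.lift_fst]
        apply ih.hom_ext
        · erw [Category.assoc, ← hφfst, ← Category.assoc, hm₁, ih.lift_fst]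
        · apply Pi.hom_ext
          intro j
          simp only [Category.assoc, limit.lift_π, Fan.mk_pt, Fan.mk_π_app]
          refine ((Category.assoc _ _ _).trans ((whisker_eq m (chainVertex_castSucc' _ _ _ _ k j).symm).trans (hmv j.castSucc))).trans ?_
          exact ((comp_lift_eq (ih.lift _ _ _) _ _
              (ih.lift_snd _ _ (baseChange_w1 X f₀ k s.fst s.snd s.condition)) j).trans (Pi.lift_π _ _)).symm
      · rw [pullback.lift_snd]
        apply pullback.hom_ext
        · exact (Category.assoc _ _ _).trans ((whisker_eq m hφsnd.symm).trans ((Category.assoc _ _ _).symm.trans ((eq_whisker hm₁ _).trans (pullback.lift_fst _ _ _).symm)))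
        · apply Limits.prod.hom_ext
          · conv_rhs => rw [Category.assoc, ← Category.assoc, pullback.lift_snd, prod.lift_fst]
            simp only [Category.assoc]
            exact (Category.assoc _ _ _).trans ((whisker_eq m (hlast2.symm.trans (chainVertex_castSucc' _ _ _ _ k (Fin.last (k+1))).symm)).trans (hmv (Fin.castSucc (Fin.last (k+1)))))
          · conv_rhs => rw [Category.assoc, ← Category.assoc, pullback.lift_snd, prod.lift_snd]
            simp only [Category.assoc]
            exact (Category.assoc _ _ _).trans ((whisker_eq m hlast3).trans (hmv (Fin.last (k+2))))

/-- For each `k ≥ 2`, the `k`-fold fiber product of the base change `X(f₀)` is the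
pullback of the `k`-fold fiber product of `X` along the `(k+1)`-fold product map
`f₀ × ⋯ × f₀ : Y₀^{k+1} → X₀^{k+1}`. -/
theorem baseChange_chain_isPullback :
    ∀ k, 2 ≤ k →
      IsPullback (baseChangeChainMap X f₀ k).1
        (Pi.lift fun i : Fin (k + 1) =>
          chainVertex Y₀ (pullback (prod.lift X.src X.tgt) (prod.map f₀ f₀))
            (pullback.snd (prod.lift X.src X.tgt) (prod.map f₀ f₀) ≫ prod.fst)
            (pullback.snd (prod.lift X.src X.tgt) (prod.map f₀ f₀) ≫ prod.snd) k i)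
        (Pi.lift fun i : Fin (k + 1) => chainVertex X.X₀ X.X₁ X.src X.tgt k i)
        (Limits.Pi.map fun _ : Fin (k + 1) => f₀) := by
  intro k hk
  obtain ⟨k, rfl⟩ : ∃ m, k = m + 2 := ⟨k - 2, by omega⟩
  exact baseChange_chain_isPullback_aux X f₀ (k+1)

end
end
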